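/- For globular groups G and H, the subgroup P(G⊗H)_n^δ := {v ∈ (G⊗H)_n : π_{n-1}^δ(v) = 0} decomposes as the internal direct sum ⊕_{i+j=n} PG_i^δ ⊗ PH_j^{(-1)^i δ}, where PG_i^δ = {g ∈ G_i : π_{i-1}^δ(g) = 0}. -/

import Mathlib

open scoped TensorProduct

/-- The sign `(-1)^i ε`: `ε` if `i` is even, the opposite sign if `i` is odd. -/
def sflip (i : ℤ) (ε : Bool) : Bool := if Even i then ε else !ε

lemma sflip_succ (i : ℤ) (ε : Bool) : sflip (i + 1) ε = sflip i (!ε) := by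
  by_cases h : Even i
  · simp [sflip, h, Int.even_add_one]
  · simp [sflip, h, Int.even_add_one]

lemma tele_nat {M : Type*} [AddCommGroup M] (F : ℤ → M) (k : ℕ) :
    (∑ i ∈ Finset.Icc (0:ℤ) (k:ℤ), (F (i-1) - F i)) = F (-1) - F k := by
  induction k with
  | zero => simp
  | succ m ih =>
      have hins : Finset.Icc (0:ℤ) ((m:ℤ)+1) = insert ((m:ℤ)+1) (Finset.Icc 0 (m:ℤ)) := by
        ext x; simp only [Finset.mem_Icc, Finset.mem_insert]; omega
      push_cast
      rw [hins, Finset.sum_insert (by simp), ih]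
      have h1 : (m:ℤ) + 1 - 1 = m := by ring
      rw [h1]; abel

lemma tele_int {M : Type*} [AddCommGroup M] (F : ℤ → M) (m : ℤ) (hm : 0 ≤ m) :
    (∑ i ∈ Finset.Icc (0:ℤ) m, (F (i-1) - F i)) = F (-1) - F m := by
  obtain ⟨k, rfl⟩ := Int.eq_ofNat_of_zero_le hm
  exact tele_nat F k

/-- For globular groups `G`, `H`, the subgroup
`P(G⊗H)_n^δ = {v ∈ (G⊗H)_n : π_{n-1}^δ v = 0}` is the internal direct sum
`⊕_{i+j=n} PG_i^δ ⊗ PH_j^{(-1)^i δ}`: every such `v` has a unique decomposition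
`v = Σ_{i=0}^n w_i` with `w_i` in the subgroup generated by the tensors `g ⊗ h`
with `g ∈ PG_i^δ` and `h ∈ PH_{n-i}^{(-1)^i δ}`. -/
theorem tensor_P_direct_sum
    {G H : Type*} [AddCommGroup G] [AddCommGroup H]
    (π : Bool → ℤ → G →+ G) (ρ : Bool → ℤ → H →+ H)
    (hπneg : ∀ (ε : Bool) (k : ℤ), k < 0 → π ε k = 0)
    (hρneg : ∀ (ε : Bool) (k : ℤ), k < 0 → ρ ε k = 0)
    (hπlt : ∀ (ε δ : Bool) (i j : ℤ), i < j → ∀ x, π ε i (π δ j x) = π ε i x)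
    (hπle : ∀ (ε δ : Bool) (i j : ℤ), j ≤ i → ∀ x, π ε i (π δ j x) = π δ j x)
    (hρlt : ∀ (ε δ : Bool) (i j : ℤ), i < j → ∀ y, ρ ε i (ρ δ j y) = ρ ε i y)
    (hρle : ∀ (ε δ : Bool) (i j : ℤ), j ≤ i → ∀ y, ρ ε i (ρ δ j y) = ρ δ j y)
    (hπar : ∀ x : G, ∃ n : ℤ, π true n x = x)
    (hρar : ∀ y : H, ∃ n : ℤ, ρ true n y = y)
    (πT : Bool → ℤ → G ⊗[ℤ] H → G ⊗[ℤ] H)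
    (hTadd : ∀ (ε : Bool) (n : ℤ) (a b : G ⊗[ℤ] H),
      πT ε n (a + b) = πT ε n a + πT ε n b)
    (hTdef : ∀ (ε : Bool) (n : ℤ) (g : G) (h : H),
      πT ε n (g ⊗ₜ[ℤ] h) =
        ∑ᶠ k : ℤ, (π ε k g - π ε (k - 1) g) ⊗ₜ[ℤ] ρ (sflip k ε) (n - k) h)
    (n : ℤ) (hn : 0 ≤ n) (δ : Bool) (v : G ⊗[ℤ] H)
    (hv1 : πT true n v = v) (hv2 : πT δ (n - 1) v = 0) :
    ∃! f : ℤ → G ⊗[ℤ] H,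
      (∀ i : ℤ, f i ∈ AddSubgroup.closure
          {t : G ⊗[ℤ] H | ∃ (g : G) (h : H),
            π true i g = g ∧ π δ (i - 1) g = 0 ∧
            ρ true (n - i) h = h ∧ ρ (sflip i δ) (n - i - 1) h = 0 ∧
            t = g ⊗ₜ[ℤ] h}) ∧
      (∀ i : ℤ, i ∉ Finset.Icc 0 n → f i = 0) ∧
      v = ∑ i ∈ Finset.Icc (0 : ℤ) n, f i := by
  classical
  have hπ0 : ∀ (ε : Bool) (k : ℤ) (x : G), k < 0 → π ε k x = 0 := by
    intro ε k x hk; rw [hπneg ε k hk]; rfl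
  have hρ0 : ∀ (ε : Bool) (k : ℤ) (y : H), k < 0 → ρ ε k y = 0 := by
    intro ε k y hk; rw [hρneg ε k hk]; rfl
  set E : ℤ → G ⊗[ℤ] H →ₗ[ℤ] G ⊗[ℤ] H := fun i =>
    TensorProduct.map ((π true i).toIntLinearMap - (π δ (i-1)).toIntLinearMap)
      ((ρ true (n-i)).toIntLinearMap - (ρ (sflip i δ) (n-i-1)).toIntLinearMap) with hE
  have hEtmul : ∀ (i : ℤ) (g : G) (h : H), E i (g ⊗ₜ[ℤ] h)
      = (π true i g - π δ (i-1) g) ⊗ₜ[ℤ] (ρ true (n-i) h - ρ (sflip i δ) (n-i-1) h) := by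
    intro i g h
    rw [hE]
    exact TensorProduct.map_tmul _ _ _ _
  -- membership of E i w in the closure
  have hEmem : ∀ (i : ℤ) (w : G ⊗[ℤ] H), E i w ∈ AddSubgroup.closure
      {t : G ⊗[ℤ] H | ∃ (g : G) (h : H),
        π true i g = g ∧ π δ (i - 1) g = 0 ∧
        ρ true (n - i) h = h ∧ ρ (sflip i δ) (n - i - 1) h = 0 ∧
        t = g ⊗ₜ[ℤ] h} := by
    intro i w
    induction w using TensorProduct.induction_on with
    | zero => rw [map_zero]; exact AddSubgroup.zero_mem _
    | tmul g h =>
        rw [hEtmul]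
        apply AddSubgroup.subset_closure
        refine ⟨π true i g - π δ (i-1) g, ρ true (n-i) h - ρ (sflip i δ) (n-i-1) h,
          ?_, ?_, ?_, ?_, rfl⟩
        · rw [map_sub, hπle true true i i le_rfl, hπle true δ i (i-1) (by omega)]
        · rw [map_sub, hπlt δ true (i-1) i (by omega), hπle δ δ (i-1) (i-1) le_rfl, sub_self]
        · rw [map_sub, hρle true true (n-i) (n-i) le_rfl,
            hρle true (sflip i δ) (n-i) (n-i-1) (by omega)]
        · rw [map_sub, hρlt (sflip i δ) true (n-i-1) (n-i) (by omega),
            hρle (sflip i δ) (sflip i δ) (n-i-1) (n-i-1) le_rfl, sub_self]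
    | add x y hx hy => rw [map_add]; exact AddSubgroup.add_mem _ hx hy
  -- E i vanishes outside [0, n]
  have hEout : ∀ i : ℤ, i ∉ Finset.Icc (0:ℤ) n → ∀ w : G ⊗[ℤ] H, E i w = 0 := by
    intro i hi w
    have hi' : i < 0 ∨ n < i := by
      rcases Finset.mem_Icc.not.mp hi with h
      omega
    induction w using TensorProduct.induction_on with
    | zero => exact map_zero _
    | tmul g h =>
        rw [hEtmul]
        rcases hi' with hi' | hi'
        · rw [hπ0 true i g hi', hπ0 δ (i-1) g (by omega), sub_self, TensorProduct.zero_tmul]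
        · rw [hρ0 true (n-i) h (by omega), hρ0 (sflip i δ) (n-i-1) h (by omega), sub_self,
            TensorProduct.tmul_zero]
    | add x y hx hy => rw [map_add, hx, hy, add_zero]
  -- orthogonality: E j kills the i-th closure for j ≠ i
  have hker : ∀ (i j : ℤ), j ≠ i → ∀ w ∈ AddSubgroup.closure
      {t : G ⊗[ℤ] H | ∃ (g : G) (h : H),
        π true i g = g ∧ π δ (i - 1) g = 0 ∧
        ρ true (n - i) h = h ∧ ρ (sflip i δ) (n - i - 1) h = 0 ∧
        t = g ⊗ₜ[ℤ] h}, E j w = 0 := by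
    intro i j hji w hw
    induction hw using AddSubgroup.closure_induction with
    | mem t ht =>
        obtain ⟨g, h, hg1, hg2, hh1, hh2, rfl⟩ := ht
        rw [hEtmul]
        rcases lt_or_gt_of_ne hji with hlt | hgt
        · -- j < i : the H-side factor vanishes
          have e1 : ρ true (n-j) h = h := by
            conv_lhs => rw [← hh1]
            rw [hρle true true (n-j) (n-i) (by omega), hh1]
          have e2 : ρ (sflip j δ) (n-j-1) h = h := by
            conv_lhs => rw [← hh1]
            rw [hρle (sflip j δ) true (n-j-1) (n-i) (by omega), hh1]
          rw [e1, e2, sub_self, TensorProduct.tmul_zero]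
        · -- j > i : the G-side factor vanishes
          have e1 : π true j g = g := by
            conv_lhs => rw [← hg1]
            rw [hπle true true j i (by omega), hg1]
          have e2 : π δ (j-1) g = g := by
            conv_lhs => rw [← hg1]
            rw [hπle δ true (j-1) i (by omega), hg1]
          rw [e1, e2, sub_self, TensorProduct.zero_tmul]
    | zero => exact map_zero _
    | add x y hx hy ihx ihy => rw [map_add, ihx, ihy, add_zero]
    | neg x hx ihx => rw [map_neg, ihx, neg_zero]
  -- E i is the identity on the i-th closure
  have hid : ∀ (i : ℤ), ∀ w ∈ AddSubgroup.closure
      {t : G ⊗[ℤ] H | ∃ (g : G) (h : H),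
        π true i g = g ∧ π δ (i - 1) g = 0 ∧
        ρ true (n - i) h = h ∧ ρ (sflip i δ) (n - i - 1) h = 0 ∧
        t = g ⊗ₜ[ℤ] h}, E i w = w := by
    intro i w hw
    induction hw using AddSubgroup.closure_induction with
    | mem t ht =>
        obtain ⟨g, h, hg1, hg2, hh1, hh2, rfl⟩ := ht
        rw [hEtmul, hg1, hg2, hh1, hh2, sub_zero, sub_zero]
    | zero => exact map_zero _
    | add x y hx hy ihx ihy => rw [map_add, ihx, ihy]
    | neg x hx ihx => rw [map_neg, ihx]
  -- πT kills 0
  have hT0 : ∀ (ε : Bool) (m : ℤ), πT ε m 0 = 0 := by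
    intro ε m
    have h := hTadd ε m 0 0
    rw [add_zero] at h
    have h' : πT ε m 0 + 0 = πT ε m 0 + πT ε m 0 := by rw [add_zero]; exact h
    exact (add_left_cancel h').symm
  -- the finsum in hTdef is a finite sum over Icc 0 m
  have hfin : ∀ (ε : Bool) (m : ℤ) (g : G) (h : H),
      πT ε m (g ⊗ₜ[ℤ] h) = ∑ k ∈ Finset.Icc (0:ℤ) m,
        (π ε k g - π ε (k-1) g) ⊗ₜ[ℤ] ρ (sflip k ε) (m-k) h := by
    intro ε m g h
    rw [hTdef]
    apply finsum_eq_finset_sum_of_support_subset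
    intro k hk
    simp only [Finset.coe_Icc, Set.mem_Icc]
    by_contra hkm
    push_neg at hkm
    apply hk
    show (π ε k g - π ε (k-1) g) ⊗ₜ[ℤ] ρ (sflip k ε) (m-k) h = 0
    have hcase : k < 0 ∨ m < k := by
      by_cases h0 : 0 ≤ k
      · right; exact hkm h0
      · left; omega
    rcases hcase with hc | hc
    · rw [hπ0 ε k g hc, hπ0 ε (k-1) g (by omega), sub_self, TensorProduct.zero_tmul]
    · rw [hρ0 (sflip k ε) (m-k) h (by omega), TensorProduct.tmul_zero]
  -- the component formula : E i ∘ πT true n on pure tensors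
  have hEof : ∀ i ∈ Finset.Icc (0:ℤ) n, ∀ (g : G) (h : H),
      E i (πT true n (g ⊗ₜ[ℤ] h)) =
        (π true i g - π δ (i-1) g) ⊗ₜ[ℤ]
          (ρ (sflip i true) (n-i) h - ρ (sflip i δ) (n-i-1) h) := by
    intro i hi g h
    have hz : ∀ k ∈ Finset.Icc (0:ℤ) n, k ≠ i →
        E i ((π true k g - π true (k-1) g) ⊗ₜ[ℤ] ρ (sflip k true) (n-k) h) = 0 := by
      intro k hk hki
      rw [hEtmul]
      have hfac : π true i (π true k g - π true (k-1) g)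
          - π δ (i-1) (π true k g - π true (k-1) g) = 0 := by
        rw [map_sub, map_sub]
        rcases lt_or_gt_of_ne hki with hc | hc
        · rw [hπle true true i k (by omega), hπle true true i (k-1) (by omega),
            hπle δ true (i-1) k (by omega), hπle δ true (i-1) (k-1) (by omega)]
          abel
        · rw [hπlt true true i k (by omega), hπlt δ true (i-1) k (by omega),
            hπlt δ true (i-1) (k-1) (by omega)]
          have hik : i ≤ k - 1 := by omega
          rcases hik.lt_or_eq with hlt | heq
          · rw [hπlt true true i (k-1) hlt]; abel
          · rw [← heq, hπle true true i i le_rfl]; abel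
      rw [hfac, TensorProduct.zero_tmul]
    rw [hfin true n g h, map_sum, Finset.sum_eq_single_of_mem i hi hz, hEtmul]
    congr 1
    · rw [map_sub (π true i), map_sub (π δ (i-1)), hπle true true i i le_rfl,
        hπle true true i (i-1) (by omega), hπlt δ true (i-1) i (by omega),
        hπle δ true (i-1) (i-1) le_rfl]
      abel
    · rw [hρle true (sflip i true) (n-i) (n-i) le_rfl,
        hρlt (sflip i δ) (sflip i true) (n-i-1) (n-i) (by omega)]
  -- the key identity
  have key : ∀ w : G ⊗[ℤ] H,
      (∑ i ∈ Finset.Icc (0:ℤ) n, E i (πT true n w)) = πT true n w - πT δ (n-1) w := by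
    intro w
    induction w using TensorProduct.induction_on with
    | zero =>
        rw [hT0, hT0]
        simp
    | tmul g h =>
        have hL : (∑ i ∈ Finset.Icc (0:ℤ) n, E i (πT true n (g ⊗ₜ[ℤ] h)))
            = ∑ i ∈ Finset.Icc (0:ℤ) n, (π true i g - π δ (i-1) g) ⊗ₜ[ℤ]
                (ρ (sflip i true) (n-i) h - ρ (sflip i δ) (n-i-1) h) :=
          Finset.sum_congr rfl (fun i hi => hEof i hi g h)
        rw [hL, hfin true n g h, hfin δ (n-1) g h]
        -- extend the second sum from Icc 0 (n-1) to Icc 0 n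
        have hext : (∑ k ∈ Finset.Icc (0:ℤ) (n-1),
              (π δ k g - π δ (k-1) g) ⊗ₜ[ℤ] ρ (sflip k δ) (n-1-k) h)
            = ∑ k ∈ Finset.Icc (0:ℤ) n,
              (π δ k g - π δ (k-1) g) ⊗ₜ[ℤ] ρ (sflip k δ) (n-1-k) h := by
          apply Finset.sum_subset (Finset.Icc_subset_Icc_right (by omega))
          intro x hx hx'
          have h1 := Finset.mem_Icc.mp hx
          have h2 : ¬ (0 ≤ x ∧ x ≤ n-1) := fun c => hx' (Finset.mem_Icc.mpr c)
          rw [hρ0 (sflip x δ) (n-1-x) h (by omega), TensorProduct.tmul_zero]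
        rw [hext, ← Finset.sum_sub_distrib, ← sub_eq_zero, ← Finset.sum_sub_distrib]
        have hterm : ∀ i ∈ Finset.Icc (0:ℤ) n,
            ((π true i g - π δ (i-1) g) ⊗ₜ[ℤ]
                (ρ (sflip i true) (n-i) h - ρ (sflip i δ) (n-i-1) h)
              - ((π true i g - π true (i-1) g) ⊗ₜ[ℤ] ρ (sflip i true) (n-i) h
                - (π δ i g - π δ (i-1) g) ⊗ₜ[ℤ] ρ (sflip i δ) (n-1-i) h))
            = (fun j : ℤ => (π true j g - π δ j g) ⊗ₜ[ℤ] ρ (sflip (j+1) true) (n-j-1) h) (i-1)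
              - (fun j : ℤ => (π true j g - π δ j g) ⊗ₜ[ℤ] ρ (sflip (j+1) true) (n-j-1) h) i := by
          intro i hi
          simp only []
          have e1 : n-1-i = n-i-1 := by ring
          have e2 : i-1+1 = i := by ring
          have e3 : n-(i-1)-1 = n-i := by ring
          rw [e1, e2, e3]
          rcases Bool.eq_false_or_eq_true δ with hδ | hδ <;> rw [hδ]
          · -- δ = true
            simp only [TensorProduct.tmul_sub, TensorProduct.sub_tmul, sub_self,
              TensorProduct.zero_tmul]
          · -- δ = false
            rw [sflip_succ i true]
            simp only [Bool.not_true, TensorProduct.tmul_sub, TensorProduct.sub_tmul]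
            abel
        rw [Finset.sum_congr rfl hterm,
          tele_int (fun j : ℤ => (π true j g - π δ j g) ⊗ₜ[ℤ] ρ (sflip (j+1) true) (n-j-1) h) n hn]
        rw [hπ0 true (-1) g (by omega), hπ0 δ (-1) g (by omega), sub_self,
          TensorProduct.zero_tmul, hρ0 (sflip (n+1) true) (n-n-1) h (by omega),
          TensorProduct.tmul_zero, sub_zero]
    | add x y hx hy =>
        rw [hTadd, hTadd]
        simp only [map_add, Finset.sum_add_distrib, hx, hy]
        abel
  -- the decomposition of v
  have hsum : v = ∑ i ∈ Finset.Icc (0:ℤ) n, E i v := by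
    have h := key v
    rw [hv1, hv2, sub_zero] at h
    exact h.symm
  refine ⟨fun i => E i v, ⟨fun i => hEmem i v, fun i hi => hEout i hi v, hsum⟩, ?_⟩
  rintro f ⟨hf1, hf2, hf3⟩
  funext i
  by_cases hi : i ∈ Finset.Icc (0:ℤ) n
  · show f i = E i v
    have hEv : E i v = f i := by
      rw [hf3, map_sum, Finset.sum_eq_single_of_mem i hi
        (fun j hj hji => hker j i (Ne.symm hji) (f j) (hf1 j))]
      exact hid i (f i) (hf1 i)
    exact hEv.symm
  · show f i = E i v
    rw [hf2 i hi]
    exact (hEout i hi v).symm
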